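/- Let X_1,...,X_n be independent random variables with values in the non-negative integers, with CDFs F_i(m) = P(X_i \le m) and survival functions \bar F_i(m) = P(X_i > m). Then E[X_{r:n}^p] = \sum_{m=0}^{\infty} ((m+1)^p - m^p) \sum_{s=0}^{r-1} \sum_{S \subseteq {1,...,n}, |S|=s} (\prod_{i \in S} F_i(m)) (\prod_{i \notin S} \bar F_i(m)). -/

import Mathlib

open MeasureTheory ProbabilityTheory
open scoped ENNReal

/-- The `r`-th order statistic (r-th smallest, `r ∈ {1,...,n}`) of `X_1,...,X_n`. -/
noncomputable def orderStat {Ω : Type*} {n : ℕ} (r : ℕ) (X : Fin n → Ω → ℕ) (ω : Ω) : ℕ :=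
  sInf {m | r ≤ (Finset.univ.filter (fun i => X i ω ≤ m)).card}

/-- Layer-cake formula for `p`-th moments of ℕ-valued functions. -/
lemma layer_cake {Ω : Type*} [MeasurableSpace Ω] (μ : Measure Ω)
    (Y : Ω → ℕ) (hY : ∀ m, MeasurableSet {ω | m < Y ω}) (p : ℕ) (hp : 1 ≤ p) :
    ∫⁻ ω, ((Y ω ^ p : ℕ) : ℝ≥0∞) ∂μ
      = ∑' m : ℕ, (((m + 1) ^ p - m ^ p : ℕ) : ℝ≥0∞) * μ {ω | m < Y ω} := by
  have hpt : ∀ ω, ((Y ω ^ p : ℕ) : ℝ≥0∞)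
      = ∑' m : ℕ, Set.indicator {ω | m < Y ω}
          (fun _ => (((m + 1) ^ p - m ^ p : ℕ) : ℝ≥0∞)) ω := by
    intro ω
    rw [tsum_eq_sum (s := Finset.range (Y ω)) (by
      intro m hm
      simp only [Finset.mem_range, not_lt] at hm
      exact Set.indicator_of_notMem (by simpa using Nat.not_lt.2 hm) _)]
    have : ∀ m ∈ Finset.range (Y ω),
        Set.indicator {ω | m < Y ω} (fun _ => (((m + 1) ^ p - m ^ p : ℕ) : ℝ≥0∞)) ω
          = (((m + 1) ^ p - m ^ p : ℕ) : ℝ≥0∞) := by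
      intro m hm
      exact Set.indicator_of_mem (by simpa using Finset.mem_range.1 hm) _
    rw [Finset.sum_congr rfl this, ← Nat.cast_sum]
    congr 1
    have := Finset.sum_range_tsub (f := fun m => m ^ p) (fun a b hab => Nat.pow_le_pow_left hab p) (Y ω)
    rw [this, Nat.zero_pow (by omega : 0 < p), Nat.sub_zero]
  simp only [hpt]
  rw [lintegral_tsum (fun m => (Measurable.indicator measurable_const (hY m)).aemeasurable)]
  congr 1
  ext m
  rw [lintegral_indicator_const (hY m)]

theorem stmt5 {Ω : Type*} [MeasurableSpace Ω] (μ : Measure Ω) [IsProbabilityMeasure μ]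
    {n : ℕ} (X : Fin n → Ω → ℕ) (hX : ∀ i, Measurable (X i))
    (hindep : iIndepFun X μ)
    (r : ℕ) (hr : 1 ≤ r) (hrn : r ≤ n) (p : ℕ) (hp : 1 ≤ p) :
    ∫⁻ ω, ((orderStat r X ω ^ p : ℕ) : ℝ≥0∞) ∂μ
      = ∑' m : ℕ, (((m + 1) ^ p - m ^ p : ℕ) : ℝ≥0∞) *
          ∑ s ∈ Finset.range r, ∑ S ∈ Finset.powersetCard s (Finset.univ : Finset (Fin n)),
            (∏ i ∈ S, μ {ω | X i ω ≤ m}) * ∏ i ∈ Sᶜ, μ {ω | m < X i ω} := by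
  classical
  -- the key characterization of the order statistic
  have key : ∀ ω m, orderStat r X ω ≤ m ↔
      r ≤ (Finset.univ.filter (fun i => X i ω ≤ m)).card := by
    intro ω m
    constructor
    · intro h
      have hne : {k | r ≤ (Finset.univ.filter (fun i => X i ω ≤ k)).card}.Nonempty := by
        refine ⟨Finset.univ.sup (fun i => X i ω), ?_⟩
        have : Finset.univ.filter (fun i => X i ω ≤ Finset.univ.sup (fun i => X i ω))
            = Finset.univ := by
          apply Finset.filter_true_of_mem
          intro i _
          exact Finset.le_sup (f := fun i => X i ω) (Finset.mem_univ i)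
        simp only [Set.mem_setOf_eq, this, Finset.card_univ, Fintype.card_fin]
        exact hrn
      have hmem := Nat.sInf_mem hne
      simp only [Set.mem_setOf_eq] at hmem
      refine le_trans hmem (Finset.card_le_card ?_)
      intro i hi
      simp only [Finset.mem_filter, Finset.mem_univ, true_and] at hi ⊢
      exact le_trans hi h
    · intro h
      exact Nat.sInf_le h
  -- measurability of the counting function
  have hcard : ∀ m : ℕ, Measurable
      (fun ω => (Finset.univ.filter (fun i => X i ω ≤ m)).card) := by
    intro m
    have : (fun ω => (Finset.univ.filter (fun i => X i ω ≤ m)).card)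
        = fun ω => ∑ i : Fin n, if X i ω ≤ m then 1 else 0 := by
      funext ω
      rw [Finset.card_filter]
    rw [this]
    exact Finset.measurable_sum _ fun i _ =>
      Measurable.ite (measurableSet_le (hX i) measurable_const)
        measurable_const measurable_const
  have hsetlt : ∀ m : ℕ, {ω | m < orderStat r X ω}
      = {ω | (Finset.univ.filter (fun i => X i ω ≤ m)).card < r} := by
    intro m
    ext ω
    simp only [Set.mem_setOf_eq, ← Nat.not_le, ← key ω m]
  have hYmeas : ∀ m, MeasurableSet {ω | m < orderStat r X ω} := by
    intro m
    rw [hsetlt m]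
    exact measurableSet_lt (hcard m) measurable_const
  rw [layer_cake μ _ hYmeas p hp]
  refine tsum_congr fun m => ?_
  congr 1
  -- events "the set of indices with X i ≤ m equals S"
  set A : Finset (Fin n) → Set Ω :=
    fun S => {ω | Finset.univ.filter (fun i => X i ω ≤ m) = S} with hA
  set B : Finset (Fin n) → Fin n → Set Ω :=
    fun S i => if i ∈ S then {ω | X i ω ≤ m} else {ω | m < X i ω} with hB
  have hAB : ∀ S, A S = ⋂ i, B S i := by
    intro S
    ext ω
    simp only [hA, hB, Set.mem_setOf_eq, Set.mem_iInter, Finset.ext_iff,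
      Finset.mem_filter, Finset.mem_univ, true_and]
    constructor
    · intro h i
      by_cases hi : i ∈ S
      · simpa [hi] using (h i).2 hi
      · simp only [hi, if_false, Set.mem_setOf_eq]
        exact Nat.not_le.1 fun hle => hi ((h i).1 hle)
    · intro h i
      by_cases hi : i ∈ S
      · have := h i; simp only [hi, if_true, Set.mem_setOf_eq] at this
        exact ⟨fun _ => hi, fun _ => this⟩
      · have := h i; simp only [hi, if_false, Set.mem_setOf_eq] at this
        exact ⟨fun hx => absurd hx (Nat.not_le.2 this), fun hx => absurd hx hi⟩
  have hAmeas : ∀ S, MeasurableSet (A S) := by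
    intro S
    rw [hAB S]
    refine MeasurableSet.iInter fun i => ?_
    by_cases hi : i ∈ S
    · simpa [hB, hi] using measurableSet_le (hX i) measurable_const
    · simpa [hB, hi] using measurableSet_lt measurable_const (hX i)
  have hAmu : ∀ S : Finset (Fin n),
      μ (A S) = (∏ i ∈ S, μ {ω | X i ω ≤ m}) * ∏ i ∈ Sᶜ, μ {ω | m < X i ω} := by
    intro S
    rw [hAB S]
    rw [hindep.meas_iInter (s := B S) ?hs]
    case hs =>
      intro i
      by_cases hi : i ∈ S
      · exact ⟨Set.Iic m, measurableSet_Iic, by simp [hB, hi]; rfl⟩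
      · exact ⟨Set.Ioi m, measurableSet_Ioi, by simp [hB, hi]; rfl⟩
    rw [← Finset.prod_mul_prod_compl S]
    congr 1
    · exact Finset.prod_congr rfl fun i hi => by simp [hB, hi]
    · exact Finset.prod_congr rfl fun i hi => by
        simp only [Finset.mem_compl] at hi
        simp [hB, hi]
  -- decompose the event {card < r}
  have hdecomp : {ω | (Finset.univ.filter (fun i => X i ω ≤ m)).card < r}
      = ⋃ S ∈ Finset.univ.powerset.filter (fun S : Finset (Fin n) => S.card < r), A S := by
    ext ω
    simp only [Set.mem_setOf_eq, Set.mem_iUnion, Finset.mem_filter, Finset.mem_powerset, hA]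
    constructor
    · intro h
      exact ⟨Finset.univ.filter (fun i => X i ω ≤ m),
        ⟨⟨Finset.filter_subset _ _, h⟩, rfl⟩⟩
    · rintro ⟨S, ⟨-, hcard⟩, rfl⟩
      exact hcard
  have hdisj : (↑(Finset.univ.powerset.filter
      (fun S : Finset (Fin n) => S.card < r)) : Set (Finset (Fin n))).PairwiseDisjoint A := by
    intro S _ T _ hST
    apply Set.disjoint_left.2
    rintro ω hS hT
    exact hST (hS.symm.trans hT)
  rw [hsetlt m, hdecomp, measure_biUnion_finset hdisj (fun S _ => hAmeas S)]
  -- regroup the sum by cardinality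
  rw [← Finset.sum_fiberwise_of_maps_to
    (g := fun S : Finset (Fin n) => S.card) (t := Finset.range r)
    (fun S hS => Finset.mem_range.2 (Finset.mem_filter.1 hS).2) (fun S => μ (A S))]
  refine Finset.sum_congr rfl fun s hs => ?_
  have hset : (Finset.univ.powerset.filter (fun S : Finset (Fin n) => S.card < r)).filter
      (fun S => S.card = s) = Finset.powersetCard s (Finset.univ : Finset (Fin n)) := by
    ext S
    simp only [Finset.mem_filter, Finset.mem_powerset, Finset.mem_powersetCard,
      Finset.mem_range] at *
    constructor
    · rintro ⟨⟨h1, -⟩, h3⟩; exact ⟨h1, h3⟩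
    · rintro ⟨h1, h2⟩
      exact ⟨⟨h1, h2 ▸ hs⟩, h2⟩
  rw [hset]
  exact Finset.sum_congr rfl fun S _ => hAmu S
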